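/- Let P be a finite bounded poset with |P| > 1, and let b : Ant(P) → Ant(P) be the blocker map, b(A) = min I(P,A). Then the restriction of b to its image Antb(P) = b(Ant(P)) is an involution: for every B ∈ Antb(P), b(b(B)) = B. -/

import Mathlib

open scoped Classical
open Set

/-- The order filter generated by a subset. -/
def upFilter (P : Type*) [Preorder P] (S : Set P) : Set P := {x | ∃ s ∈ S, s ≤ x}

/-- The set of minimal elements of a subset. -/
def minsOf (P : Type*) [Preorder P] (S : Set P) : Set P := {x | Minimal (· ∈ S) x}

/-- The set of intersecters for `A` in `P`. -/
def inters (P : Type*) [PartialOrder P] [OrderBot P] (A : Set P) : Set P :=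
  if A = ∅ then Set.univ
  else if A = {(⊥ : P)} then ∅
  else {b | ∀ a ∈ A, a ≠ ⊥ → ∃ z : P, IsAtom z ∧ z ≤ b ∧ z ≤ a}

/-- The set of complementers for `A` in `P`. -/
def compls (P : Type*) [PartialOrder P] [OrderBot P] (A : Set P) : Set P := (inters P A)ᶜ

/-- The blocker map: the set of minimal intersecters for `A` in `P`. -/
def bmap (P : Type*) [PartialOrder P] [OrderBot P] (A : Set P) : Set P := minsOf P (inters P A)

section Aux

set_option linter.unusedSectionVars false
set_option linter.unusedVariables false

variable {P : Type*} [PartialOrder P] [BoundedOrder P] [Fintype P]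

/-- atom-intersection dual -/
def Jset (P : Type*) [PartialOrder P] [OrderBot P] (S : Set P) : Set P :=
  {x | ∀ s ∈ S, ∃ z : P, IsAtom z ∧ z ≤ x ∧ z ≤ s}

lemma J_anti {S T : Set P} (h : S ⊆ T) : Jset P T ⊆ Jset P S :=
  fun x hx s hs => hx s (h hs)

lemma subset_JJ (S : Set P) : S ⊆ Jset P (Jset P S) := by
  intro s hs x hx
  obtain ⟨z, hz, hzs, hzx⟩ := hx s hs
  exact ⟨z, hz, hzx, hzs⟩

lemma JJJ (S : Set P) : Jset P (Jset P (Jset P S)) = Jset P S :=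
  le_antisymm (J_anti (subset_JJ S)) (subset_JJ (Jset P S))

lemma exists_atom_le {a : P} (ha : a ≠ ⊥) : ∃ z : P, IsAtom z ∧ z ≤ a :=
  ((IsAtomic.eq_bot_or_exists_atom_le a).resolve_left ha)

lemma top_mem_J {S : Set P} (h : ⊥ ∉ S) : (⊤ : P) ∈ Jset P S := by
  intro s hs
  obtain ⟨z, hz, hza⟩ := exists_atom_le (fun e => h (e ▸ hs))
  exact ⟨z, hz, le_top, hza⟩

lemma bot_not_mem_J {S : Set P} (h : S.Nonempty) : (⊥ : P) ∉ Jset P S := by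
  intro hb
  obtain ⟨s, hs⟩ := h
  obtain ⟨z, hz, hzb, _⟩ := hb s hs
  exact hz.1 (le_bot_iff.mp hzb)

lemma J_mins (S : Set P) : Jset P (minsOf P (Jset P S)) = Jset P (Jset P S) := by
  refine le_antisymm ?_ (J_anti fun x hx => hx.1)
  intro x hx t ht
  obtain ⟨m, hmt, hm⟩ := (Set.toFinite (Jset P S)).exists_le_minimal ht
  obtain ⟨z, hz, hzx, hzm⟩ := hx m hm
  exact ⟨z, hz, hzx, hzm.trans hmt⟩

lemma inters_eq_J {S : Set P} (h0 : S ≠ ∅) (h1 : S ≠ {⊥}) :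
    inters P S = Jset P (S \ {⊥}) := by
  rw [inters, if_neg h0, if_neg h1]
  ext x
  constructor
  · intro hx s hs
    exact hx s hs.1 hs.2
  · intro hx s hs hsb
    exact hx s ⟨hs, hsb⟩

lemma mins_nonempty {S : Set P} (h : S.Nonempty) : (minsOf P S).Nonempty := by
  obtain ⟨s, hs⟩ := h
  obtain ⟨m, _, hm⟩ := (Set.toFinite S).exists_le_minimal hs
  exact ⟨m, hm⟩

lemma mins_subset (S : Set P) : minsOf P S ⊆ S := fun _ h => h.1

lemma minsOf_univ : minsOf P Set.univ = {(⊥ : P)} := by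
  ext x
  simp only [minsOf, Set.mem_setOf_eq, Set.mem_singleton_iff]
  constructor
  · intro hx
    exact le_antisymm (hx.2 trivial bot_le) bot_le
  · rintro rfl
    exact ⟨trivial, fun y _ hy => le_bot_iff.mp hy ▸ le_rfl⟩

lemma minsOf_empty : minsOf P (∅ : Set P) = ∅ := by
  ext x; simp [minsOf, Minimal]

lemma bmap_empty : bmap P (∅ : Set P) = {(⊥ : P)} := by
  rw [bmap, inters, if_pos rfl, minsOf_univ]

lemma bmap_bot : bmap P ({(⊥ : P)} : Set P) = ∅ := by
  rw [bmap, inters, if_neg (Set.singleton_nonempty _).ne_empty, if_pos rfl, minsOf_empty]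

lemma key (S : Set P) (hne : S.Nonempty) (hb : ⊥ ∉ S) :
    bmap P (bmap P (minsOf P (Jset P S))) = minsOf P (Jset P S) := by
  set B := minsOf P (Jset P S) with hBdef
  have hJne : (Jset P S).Nonempty := ⟨⊤, top_mem_J hb⟩
  have hBne : B.Nonempty := mins_nonempty hJne
  have hBbot : ⊥ ∉ B := fun h => bot_not_mem_J hne (mins_subset _ h)
  have hB0 : B ≠ ∅ := hBne.ne_empty
  have hB1 : B ≠ {⊥} := fun e => hBbot (e ▸ rfl)
  have hBd : B \ {⊥} = B := Set.diff_singleton_eq_self hBbot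
  have e1 : inters P B = Jset P B := by rw [inters_eq_J hB0 hB1, hBd]
  have e2 : Jset P B = Jset P (Jset P S) := J_mins S
  have hbm : bmap P B = minsOf P (Jset P (Jset P S)) := by rw [bmap, e1, e2]
  have hJJne : (Jset P (Jset P S)).Nonempty := ⟨⊤, top_mem_J (bot_not_mem_J hne)⟩
  have hCne : (bmap P B).Nonempty := hbm ▸ mins_nonempty hJJne
  have hCbot : ⊥ ∉ bmap P B := by
    rw [hbm]
    exact fun h => bot_not_mem_J hJne (mins_subset _ h)
  have hCd : bmap P B \ {⊥} = bmap P B := Set.diff_singleton_eq_self hCbot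
  have e3 : inters P (bmap P B) = Jset P (bmap P B) := by
    rw [inters_eq_J hCne.ne_empty (fun e => hCbot (e ▸ rfl)), hCd]
  have e4 : Jset P (bmap P B) = Jset P S := by
    rw [hbm, J_mins (Jset P S), JJJ]
  rw [bmap, e3, e4]

end Aux

theorem stmt_13 {P : Type*} [PartialOrder P] [BoundedOrder P] [Fintype P] [Nontrivial P]
    (B : Set P) (hB : ∃ A : Set P, IsAntichain (· ≤ ·) A ∧ bmap P A = B) :
    bmap P (bmap P B) = B := by
  obtain ⟨A, -, rfl⟩ := hB
  by_cases h0 : A = ∅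
  · subst h0
    rw [bmap_empty, bmap_bot, bmap_empty]
  by_cases h1 : A = {⊥}
  · subst h1
    rw [bmap_bot, bmap_empty, bmap_bot]
  · have hAd : (A \ {⊥}).Nonempty := by
      rw [Set.nonempty_iff_ne_empty]
      intro h
      rcases Set.subset_singleton_iff_eq.mp (Set.diff_eq_empty.mp h) with h | h
      · exact h0 h
      · exact h1 h
    have : bmap P A = minsOf P (Jset P (A \ {⊥})) := by
      rw [bmap, inters_eq_J h0 h1]
    rw [this]
    exact key (A \ {⊥}) hAd (fun h => h.2 rfl)
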